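/- The closure, in the operator norm on bounded operators of H, of the linear span of the rank-one operators {θ_{λ,μ} : λ ∈ L, μ ∈ ℤ^r} equals the set of all compact operators K on H satisfying K(H_C) ⊆ H_C for every coset C ∈ ℤ^r/L. (This is the operator-theoretic core of the isomorphism C₀(Π*)⋊_ℓΠ ≅ ⊕_{[ξ]∈Π*/ℓΠ} 𝕂(L²([ξ])).) -/

import Mathlib

open Finset

noncomputable section

/-- The Hilbert space `H = ℓ²(ℤ^r; ℂ)`. -/
abbrev Hsp (r : ℕ) := lp (fun _ : (Fin r → ℤ) => ℂ) 2

/-- The standard orthonormal basis vector `δ_μ` of `ℓ²(ℤ^r; ℂ)`. -/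
def deltaV {r : ℕ} (μ : Fin r → ℤ) : Hsp r := lp.single 2 μ 1

/-- The rank-one operator `θ_{λ,μ} : f ↦ ⟨δ_μ, f⟩·δ_{μ+λ}`. -/
def thetaOp {r : ℕ} (lam μ : Fin r → ℤ) : Hsp r →L[ℂ] Hsp r :=
  (innerSL ℂ (deltaV μ)).smulRight (deltaV (μ + lam))

/-- The lattice `L = {ℓBη : η ∈ ℤ^r} ⊆ ℤ^r`, as an additive subgroup. -/
def latticeL {r : ℕ} (ℓ : ℤ) (B : Matrix (Fin r) (Fin r) ℤ) :
    AddSubgroup (Fin r → ℤ) :=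
  (ℓ • B.mulVecLin).toAddMonoidHom.range

/-- For a coset `C ∈ ℤ^r/L`, the closed subspace `H_C ⊆ H` spanned by `{δ_μ : μ ∈ C}`. -/
def cosetSubspace {r : ℕ} (ℓ : ℤ) (B : Matrix (Fin r) (Fin r) ℤ)
    (q : (Fin r → ℤ) ⧸ latticeL ℓ B) : Set (Hsp r) :=
  closure (↑(Submodule.span ℂ
    {v : Hsp r | ∃ μ : Fin r → ℤ, (QuotientAddGroup.mk μ : (Fin r → ℤ) ⧸ latticeL ℓ B) = q
      ∧ v = deltaV μ}) : Set (Hsp r))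

open Filter
open scoped ENNReal

namespace ThetaAux

variable {r : ℕ}

local notation "⟪" x ", " y "⟫" => @inner ℂ _ _ x y

lemma inner_deltaV (μ : Fin r → ℤ) (f : Hsp r) : ⟪deltaV μ, f⟫ = f μ := by
  rw [deltaV, lp.inner_single_left]
  simp [RCLike.inner_apply]

variable {ℓ : ℤ} {B : Matrix (Fin r) (Fin r) ℤ}

/-- The coset subspace as a submodule. -/
def cosetSM (ℓ : ℤ) (B : Matrix (Fin r) (Fin r) ℤ) (q : (Fin r → ℤ) ⧸ latticeL ℓ B) :
    Submodule ℂ (Hsp r) :=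
  (Submodule.span ℂ
    {v : Hsp r | ∃ μ : Fin r → ℤ, (QuotientAddGroup.mk μ : (Fin r → ℤ) ⧸ latticeL ℓ B) = q
      ∧ v = deltaV μ}).topologicalClosure

lemma cosetSubspace_eq (q : (Fin r → ℤ) ⧸ latticeL ℓ B) :
    cosetSubspace ℓ B q = ↑(cosetSM ℓ B q) :=
  (Submodule.topologicalClosure_coe _).symm

lemma mem_coset_iff (q : (Fin r → ℤ) ⧸ latticeL ℓ B) (f : Hsp r) :
    f ∈ cosetSubspace ℓ B q ↔ f ∈ cosetSM ℓ B q := by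
  rw [cosetSubspace_eq]; exact SetLike.mem_coe

lemma isClosed_cosetSubspace (q : (Fin r → ℤ) ⧸ latticeL ℓ B) :
    IsClosed (cosetSubspace ℓ B q) := isClosed_closure

lemma deltaV_mem_coset (μ : Fin r → ℤ) :
    deltaV μ ∈ cosetSubspace ℓ B (QuotientAddGroup.mk μ) :=
  subset_closure (Submodule.subset_span ⟨μ, rfl, rfl⟩)

lemma inner_deltaV_eq_zero_of_ne {q : (Fin r → ℤ) ⧸ latticeL ℓ B} {ν : Fin r → ℤ}
    (hν : (QuotientAddGroup.mk ν : (Fin r → ℤ) ⧸ latticeL ℓ B) ≠ q)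
    {f : Hsp r} (hf : f ∈ cosetSubspace ℓ B q) : ⟪deltaV ν, f⟫ = 0 := by
  set φ := innerSL ℂ (deltaV ν) with hφ
  have hle : Submodule.span ℂ
      {v : Hsp r | ∃ μ : Fin r → ℤ, (QuotientAddGroup.mk μ : (Fin r → ℤ) ⧸ latticeL ℓ B) = q
        ∧ v = deltaV μ} ≤ LinearMap.ker (φ : Hsp r →ₗ[ℂ] ℂ) := by
    refine Submodule.span_le.mpr ?_
    rintro w ⟨μ, hμ, rfl⟩
    have hne : ν ≠ μ := fun h => hν (h ▸ hμ)
    have : φ (deltaV μ) = 0 := by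
      rw [hφ, innerSL_apply_apply, inner_deltaV]
      exact lp.single_apply_ne 2 μ 1 hne
    simpa [LinearMap.mem_ker] using this
  have hker : cosetSubspace ℓ B q ⊆ (LinearMap.ker (φ : Hsp r →ₗ[ℂ] ℂ) : Set (Hsp r)) :=
    closure_minimal (fun v hv => hle hv) (ContinuousLinearMap.isClosed_ker φ)
  exact hker hf

lemma single_eq_smul (μ : Fin r → ℤ) (c : ℂ) : lp.single 2 μ c = c • deltaV μ := by
  rw [deltaV, ← lp.single_smul, smul_eq_mul, mul_one]

lemma thetaOp_apply (lam μ : Fin r → ℤ) (f : Hsp r) :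
    thetaOp lam μ f = f μ • deltaV (μ + lam) := by
  rw [thetaOp, ContinuousLinearMap.smulRight_apply, innerSL_apply_apply, inner_deltaV]

lemma isCompactOperator_thetaOp (lam μ : Fin r → ℤ) :
    IsCompactOperator ⇑(thetaOp lam μ) := by
  have h1 : IsCompactOperator ⇑(ContinuousLinearMap.toSpanSingleton ℂ
      (deltaV (μ + lam) : Hsp r)) := by
    refine ⟨(fun c : ℂ => c • (deltaV (μ + lam) : Hsp r)) '' Metric.closedBall 0 1,
      ?_, ?_⟩
    · exact (isCompact_closedBall 0 1).image (by continuity)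
    · refine Filter.mem_of_superset (Metric.closedBall_mem_nhds 0 one_pos) ?_
      intro c hc
      exact ⟨c, hc, rfl⟩
  have h2 := h1.comp_clm (innerSL ℂ (deltaV μ : Hsp r))
  have heq : ⇑(thetaOp lam μ) = ⇑(ContinuousLinearMap.toSpanSingleton ℂ
      (deltaV (μ + lam) : Hsp r)) ∘ ⇑(innerSL ℂ (deltaV μ : Hsp r)) := by
    funext f
    simp [thetaOp_apply, ContinuousLinearMap.toSpanSingleton_apply, inner_deltaV]
  rw [heq]; exact h2

lemma mk_add_lattice {lam μ : Fin r → ℤ} (hlam : lam ∈ latticeL ℓ B) :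
    (QuotientAddGroup.mk (μ + lam) : (Fin r → ℤ) ⧸ latticeL ℓ B) = QuotientAddGroup.mk μ := by
  rw [QuotientAddGroup.eq_iff_sub_mem]
  simpa using hlam

lemma thetaOp_invariance {lam μ : Fin r → ℤ} (hlam : lam ∈ latticeL ℓ B)
    (q : (Fin r → ℤ) ⧸ latticeL ℓ B) {f : Hsp r} (hf : f ∈ cosetSubspace ℓ B q) :
    thetaOp lam μ f ∈ cosetSubspace ℓ B q := by
  rw [thetaOp_apply, mem_coset_iff]
  by_cases hq : (QuotientAddGroup.mk μ : (Fin r → ℤ) ⧸ latticeL ℓ B) = q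
  · refine Submodule.smul_mem _ _ ?_
    rw [← mem_coset_iff, ← hq, ← mk_add_lattice (μ := μ) hlam]
    exact deltaV_mem_coset _
  · have : ⟪deltaV μ, f⟫ = 0 := inner_deltaV_eq_zero_of_ne hq hf
    rw [inner_deltaV] at this
    rw [this, zero_smul]
    exact Submodule.zero_mem _

/-- The right-hand-side set, as a submodule of the operator space. -/
def rhsSM (ℓ : ℤ) (B : Matrix (Fin r) (Fin r) ℤ) : Submodule ℂ (Hsp r →L[ℂ] Hsp r) where
  carrier := {K : Hsp r →L[ℂ] Hsp r | IsCompactOperator ⇑K ∧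
        ∀ q : (Fin r → ℤ) ⧸ latticeL ℓ B,
          ∀ f ∈ cosetSubspace ℓ B q, K f ∈ cosetSubspace ℓ B q}
  zero_mem' := by
    refine ⟨by simpa using isCompactOperator_zero, fun q f _ => ?_⟩
    rw [mem_coset_iff]; simpa using Submodule.zero_mem _
  add_mem' := by
    rintro K K' ⟨hK, hKi⟩ ⟨hK', hKi'⟩
    refine ⟨by simpa using hK.add hK', fun q f hf => ?_⟩
    rw [mem_coset_iff]
    have h1 := (mem_coset_iff q (K f)).mp (hKi q f hf)
    have h2 := (mem_coset_iff q (K' f)).mp (hKi' q f hf)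
    simpa using Submodule.add_mem _ h1 h2
  smul_mem' := by
    rintro c K ⟨hK, hKi⟩
    refine ⟨by simpa using hK.smul c, fun q f hf => ?_⟩
    rw [mem_coset_iff]
    have h1 := (mem_coset_iff q (K f)).mp (hKi q f hf)
    simpa using Submodule.smul_mem _ c h1

lemma isClosed_rhs : IsClosed ((rhsSM ℓ B : Submodule ℂ (Hsp r →L[ℂ] Hsp r)) : Set (Hsp r →L[ℂ] Hsp r)) := by
  have h1 : IsClosed {K : Hsp r →L[ℂ] Hsp r | IsCompactOperator ⇑K} :=
    isClosed_setOf_isCompactOperator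
  have h2 : IsClosed {K : Hsp r →L[ℂ] Hsp r |
      ∀ q : (Fin r → ℤ) ⧸ latticeL ℓ B,
        ∀ f ∈ cosetSubspace ℓ B q, K f ∈ cosetSubspace ℓ B q} := by
    have : {K : Hsp r →L[ℂ] Hsp r |
        ∀ q : (Fin r → ℤ) ⧸ latticeL ℓ B,
          ∀ f ∈ cosetSubspace ℓ B q, K f ∈ cosetSubspace ℓ B q}
        = ⋂ (q : (Fin r → ℤ) ⧸ latticeL ℓ B) (f : Hsp r) (_ : f ∈ cosetSubspace ℓ B q),
            (fun K : Hsp r →L[ℂ] Hsp r => K f) ⁻¹' cosetSubspace ℓ B q := by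
      ext K; simp
    rw [this]
    refine isClosed_iInter fun q => isClosed_iInter fun f => isClosed_iInter fun _ => ?_
    exact (isClosed_cosetSubspace q).preimage (ContinuousLinearMap.apply ℂ (Hsp r) f).continuous
  exact h1.inter h2

def projCLM (F : Finset (Fin r → ℤ)) : Hsp r →L[ℂ] Hsp r := ∑ μ ∈ F, thetaOp 0 μ

lemma projCLM_apply (F : Finset (Fin r → ℤ)) (f : Hsp r) :
    projCLM F f = ∑ μ ∈ F, lp.single 2 μ (f μ) := by
  rw [projCLM, ContinuousLinearMap.sum_apply]
  refine Finset.sum_congr rfl fun μ _ => ?_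
  rw [thetaOp_apply, add_zero, single_eq_smul]

lemma projCLM_apply' (F : Finset (Fin r → ℤ)) (f : Hsp r) :
    projCLM F f = ∑ μ ∈ F, f μ • deltaV μ := by
  rw [projCLM_apply]; exact Finset.sum_congr rfl fun μ _ => single_eq_smul μ (f μ)

lemma norm_sub_projCLM_le (F : Finset (Fin r → ℤ)) (f : Hsp r) :
    ‖f - projCLM F f‖ ≤ ‖f‖ := by
  have h2 : (0:ℝ) < (2 : ℝ≥0∞).toReal := by norm_num
  have key := lp.norm_compl_sum_single h2 f F
  rw [← projCLM_apply] at key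
  have h2' : (2 : ℝ≥0∞).toReal = ((2:ℕ):ℝ) := by norm_num
  simp only [h2', Real.rpow_natCast] at key
  have hsum : (0:ℝ) ≤ ∑ i ∈ F, ‖f i‖ ^ (2:ℕ) :=
    Finset.sum_nonneg fun i _ => by positivity
  nlinarith [norm_nonneg (f - projCLM F f), norm_nonneg f]

lemma tendsto_projCLM (f : Hsp r) :
    Filter.Tendsto (fun F => projCLM F f) Filter.atTop (nhds f) := by
  have h := lp.hasSum_single (E := fun _ : Fin r → ℤ => ℂ) (p := 2) ENNReal.ofNat_ne_top f
  have h' : Filter.Tendsto (fun F : Finset (Fin r → ℤ) => ∑ μ ∈ F, lp.single 2 μ (f μ))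
      Filter.atTop (nhds f) := h
  simpa only [← projCLM_apply] using h'

lemma eventually_proj_close (y : Hsp r) {η : ℝ} (hη : 0 < η) :
    ∀ᶠ F : Finset (Fin r → ℤ) in atTop, ‖y - projCLM F y‖ ≤ η := by
  have h2 : ∀ᶠ F : Finset (Fin r → ℤ) in atTop, dist (projCLM F y) y < η :=
    Metric.tendsto_nhds.mp (tendsto_projCLM y) _ hη
  filter_upwards [h2] with F hF
  rw [dist_eq_norm, norm_sub_rev] at hF
  exact hF.le

lemma opNorm_le_of_unit {T : Hsp r →L[ℂ] Hsp r} {c : ℝ} (hc : 0 ≤ c)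
    (h : ∀ x : Hsp r, ‖x‖ ≤ 1 → ‖T x‖ ≤ c) : ‖T‖ ≤ c := by
  refine T.opNorm_le_bound hc fun x => ?_
  rcases eq_or_ne x 0 with rfl | hx
  · simp
  · have hxn : (0:ℝ) < ‖x‖ := norm_pos_iff.mpr hx
    have hcast : ((‖x‖ : ℂ)) ≠ 0 := by exact_mod_cast hxn.ne'
    have hun : ‖((‖x‖ : ℂ))⁻¹ • x‖ ≤ 1 := by
      rw [norm_smul, norm_inv, Complex.norm_real, Real.norm_eq_abs, abs_of_pos hxn,
        inv_mul_cancel₀ hxn.ne']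
    have hxu : x = (‖x‖ : ℂ) • (((‖x‖ : ℂ))⁻¹ • x) := by
      rw [smul_smul, mul_inv_cancel₀ hcast, one_smul]
    have h2 : T x = (‖x‖ : ℂ) • T (((‖x‖ : ℂ))⁻¹ • x) := by
      conv_lhs => rw [hxu]
      rw [map_smul]
    rw [h2, norm_smul, Complex.norm_real, Real.norm_eq_abs, abs_of_pos hxn, mul_comm c]
    exact mul_le_mul_of_nonneg_left (h _ hun) hxn.le

lemma exists_left_proj (K : Hsp r →L[ℂ] Hsp r) (hK : IsCompactOperator ⇑K)
    {δ : ℝ} (hδ : 0 < δ) :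
    ∃ F : Finset (Fin r → ℤ), ‖K - (projCLM F).comp K‖ ≤ δ := by
  obtain ⟨M, hMc, hMsub⟩ :=
    IsCompactOperator.image_closedBall_subset_compact
      (𝕜₁ := ℂ) (f := (K : Hsp r →ₗ[ℂ] Hsp r)) hK 1
  obtain ⟨t, htfin, htsub⟩ := (Metric.totallyBounded_iff.mp hMc.totallyBounded)
    (δ/3) (by positivity)
  have hev : ∀ᶠ F : Finset (Fin r → ℤ) in atTop,
      ∀ y ∈ htfin.toFinset, ‖y - projCLM F y‖ ≤ δ/3 := by
    rw [Filter.eventually_all_finset]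
    exact fun y _ => eventually_proj_close y (by positivity)
  obtain ⟨F, hF⟩ := hev.exists
  refine ⟨F, ?_⟩
  have key : ∀ x : Hsp r, ‖x‖ ≤ 1 → ‖K x - projCLM F (K x)‖ ≤ δ := by
    intro x hx
    have hKx : K x ∈ M := hMsub ⟨x, by
      simpa [Metric.mem_closedBall, dist_zero_right] using hx, rfl⟩
    obtain ⟨y, hy, hdy⟩ := Set.mem_iUnion₂.mp (htsub hKx)
    have h1 : K x - projCLM F (K x)
        = ((K x - y) - projCLM F (K x - y)) + (y - projCLM F y) := by
      rw [map_sub]; abel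
    have h2 := norm_sub_projCLM_le F (K x - y)
    have h3 : ‖K x - y‖ < δ/3 := by rwa [Metric.mem_ball, dist_eq_norm] at hdy
    have h4 := hF y (htfin.mem_toFinset.mpr hy)
    calc ‖K x - projCLM F (K x)‖
        = ‖((K x - y) - projCLM F (K x - y)) + (y - projCLM F y)‖ := by rw [h1]
      _ ≤ ‖(K x - y) - projCLM F (K x - y)‖ + ‖y - projCLM F y‖ := norm_add_le _ _
      _ ≤ δ/3 + δ/3 := add_le_add (h2.trans h3.le) h4
      _ ≤ δ := by linarith
  exact opNorm_le_of_unit hδ.le fun x hx => by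
    simpa [ContinuousLinearMap.sub_apply] using key x hx

lemma inner_projCLM_right (G : Finset (Fin r → ℤ)) (w x : Hsp r) :
    ⟪w, projCLM G x⟫ = ⟪projCLM G w, x⟫ := by
  rw [projCLM_apply G x, projCLM_apply G w, inner_sum, sum_inner]
  refine Finset.sum_congr rfl fun μ _ => ?_
  rw [lp.inner_single_right, lp.inner_single_left]

lemma norm_projCLM_le_sum (F : Finset (Fin r → ℤ)) (w : Hsp r) :
    ‖projCLM F w‖ ≤ ∑ ν ∈ F, ‖w ν‖ := by
  rw [projCLM_apply]
  refine (norm_sum_le _ _).trans ?_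
  refine Finset.sum_le_sum fun ν _ => ?_
  have := lp.norm_single (E := fun _ : Fin r → ℤ => ℂ) (p := 2) (by norm_num)
    ν (w ν)
  exact le_of_eq this

lemma exists_right_proj (K : Hsp r →L[ℂ] Hsp r) {δ : ℝ} (hδ : 0 < δ)
    (F : Finset (Fin r → ℤ)) :
    ∃ G : Finset (Fin r → ℤ),
      ‖(projCLM F).comp K - (projCLM F).comp (K.comp (projCLM G))‖ ≤ δ := by
  set A := ContinuousLinearMap.adjoint K with hA
  set η : ℝ := δ / (F.card + 1) with hη
  have hηpos : 0 < η := by positivity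
  have hev : ∀ᶠ G : Finset (Fin r → ℤ) in atTop,
      ∀ ν ∈ F, ‖A (deltaV ν) - projCLM G (A (deltaV ν))‖ ≤ η := by
    rw [Filter.eventually_all_finset]
    exact fun ν _ => eventually_proj_close _ hηpos
  obtain ⟨G, hG⟩ := hev.exists
  refine ⟨G, ?_⟩
  refine ContinuousLinearMap.opNorm_le_bound _ hδ.le fun x => ?_
  have hre : ((projCLM F).comp K - (projCLM F).comp (K.comp (projCLM G))) x
      = projCLM F (K (x - projCLM G x)) := by
    simp [ContinuousLinearMap.sub_apply, map_sub]
  rw [hre]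
  refine (norm_projCLM_le_sum F _).trans ?_
  have hterm : ∀ ν ∈ F, ‖(K (x - projCLM G x) : ∀ _, ℂ) ν‖ ≤ η * ‖x‖ := by
    intro ν hν
    have h1 : (K (x - projCLM G x) : ∀ _, ℂ) ν = ⟪deltaV ν, K (x - projCLM G x)⟫ :=
      (inner_deltaV ν _).symm
    have h2 : ⟪deltaV ν, K (x - projCLM G x)⟫ = ⟪A (deltaV ν), x - projCLM G x⟫ := by
      rw [hA, ContinuousLinearMap.adjoint_inner_left]
    have h3 : ⟪A (deltaV ν), x - projCLM G x⟫
        = ⟪A (deltaV ν) - projCLM G (A (deltaV ν)), x⟫ := by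
      rw [inner_sub_right, inner_sub_left, inner_projCLM_right]
    rw [h1, h2, h3]
    refine (norm_inner_le_norm _ _).trans ?_
    exact mul_le_mul_of_nonneg_right (hG ν hν) (norm_nonneg x)
  refine (Finset.sum_le_sum hterm).trans ?_
  rw [Finset.sum_const, nsmul_eq_mul]
  have hcard : (F.card : ℝ) * (η * ‖x‖) ≤ δ * ‖x‖ := by
    have h1 : (F.card : ℝ) * η ≤ δ := by
      rw [hη, mul_div_assoc']
      rw [div_le_iff₀ (by positivity)]
      have : (F.card : ℝ) ≤ (F.card : ℝ) + 1 := by linarith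
      nlinarith [hδ.le]
    calc (F.card : ℝ) * (η * ‖x‖) = ((F.card : ℝ) * η) * ‖x‖ := by ring
      _ ≤ δ * ‖x‖ := mul_le_mul_of_nonneg_right h1 (norm_nonneg x)
  exact hcard

lemma proj_comp_eq (K : Hsp r →L[ℂ] Hsp r) (F G : Finset (Fin r → ℤ)) :
    (projCLM F).comp (K.comp (projCLM G))
      = ∑ ν ∈ F, ∑ μ ∈ G, (⟪deltaV ν, K (deltaV μ)⟫) • thetaOp (ν - μ) μ := by
  refine ContinuousLinearMap.ext fun x => ?_
  have hPG : K (projCLM G x) = ∑ μ ∈ G, x μ • K (deltaV μ) := by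
    rw [projCLM_apply', map_sum]
    simp only [map_smul]
  have hmain : projCLM F (K (projCLM G x))
      = ∑ μ ∈ G, x μ • (∑ ν ∈ F, (⟪deltaV ν, K (deltaV μ)⟫) • deltaV ν) := by
    rw [hPG, map_sum]
    refine Finset.sum_congr rfl fun μ _ => ?_
    rw [map_smul]
    congr 1
    rw [projCLM_apply']
    refine Finset.sum_congr rfl fun ν _ => ?_
    rw [inner_deltaV]
  have hidx : ∀ ν μ : Fin r → ℤ, μ + (ν - μ) = ν := fun ν μ => by abel
  simp only [ContinuousLinearMap.coe_comp', Function.comp_apply,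
    ContinuousLinearMap.sum_apply, ContinuousLinearMap.smul_apply]
  rw [hmain]
  simp only [thetaOp_apply, hidx, Finset.smul_sum, smul_smul]
  rw [Finset.sum_comm]
  exact Finset.sum_congr rfl fun ν _ => Finset.sum_congr rfl fun μ _ => by rw [mul_comm]

lemma proj_comp_mem_span (K : Hsp r →L[ℂ] Hsp r)
    (hinv : ∀ q : (Fin r → ℤ) ⧸ latticeL ℓ B,
      ∀ f ∈ cosetSubspace ℓ B q, K f ∈ cosetSubspace ℓ B q)
    (F G : Finset (Fin r → ℤ)) :
    (projCLM F).comp (K.comp (projCLM G)) ∈ Submodule.span ℂ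
      {T : Hsp r →L[ℂ] Hsp r | ∃ lam ∈ latticeL ℓ B, ∃ μ : Fin r → ℤ, T = thetaOp lam μ} := by
  rw [proj_comp_eq]
  refine Submodule.sum_mem _ fun ν _ => Submodule.sum_mem _ fun μ _ => ?_
  by_cases h : ν - μ ∈ latticeL ℓ B
  · exact Submodule.smul_mem _ _ (Submodule.subset_span ⟨ν - μ, h, μ, rfl⟩)
  · have hne : (QuotientAddGroup.mk ν : (Fin r → ℤ) ⧸ latticeL ℓ B)
        ≠ QuotientAddGroup.mk μ := fun he =>
      h ((QuotientAddGroup.eq_iff_sub_mem).mp he)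
    have hz : ⟪deltaV ν, K (deltaV μ)⟫ = 0 :=
      inner_deltaV_eq_zero_of_ne hne (hinv _ _ (deltaV_mem_coset μ))
    rw [hz, zero_smul]
    exact Submodule.zero_mem _

end ThetaAux

/-- The closure, in the operator norm, of the linear span of the rank-one operators
`{θ_{λ,μ} : λ ∈ L, μ ∈ ℤ^r}` equals the set of all compact operators `K` on
`H = ℓ²(ℤ^r; ℂ)` satisfying `K(H_C) ⊆ H_C` for every coset `C ∈ ℤ^r/L`. -/
theorem closure_span_theta_eq_blockDiagonal_compacts {r : ℕ} (hr : 1 ≤ r)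
    (ℓ : ℤ) (hℓ : ℓ ≠ 0) (B : Matrix (Fin r) (Fin r) ℤ)
    (hBsymm : B.IsSymm) (hBpos : (B.map ((↑) : ℤ → ℝ)).PosDef) :
    closure (↑(Submodule.span ℂ
        {T : Hsp r →L[ℂ] Hsp r | ∃ lam ∈ latticeL ℓ B, ∃ μ : Fin r → ℤ, T = thetaOp lam μ})
      : Set (Hsp r →L[ℂ] Hsp r))
    = {K : Hsp r →L[ℂ] Hsp r | IsCompactOperator ⇑K ∧
        ∀ q : (Fin r → ℤ) ⧸ latticeL ℓ B,
          ∀ f ∈ cosetSubspace ℓ B q, K f ∈ cosetSubspace ℓ B q} := by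
  classical
  apply Set.Subset.antisymm
  · have hsub : (↑(Submodule.span ℂ
        {T : Hsp r →L[ℂ] Hsp r | ∃ lam ∈ latticeL ℓ B, ∃ μ : Fin r → ℤ, T = thetaOp lam μ})
        : Set (Hsp r →L[ℂ] Hsp r)) ⊆ ↑(ThetaAux.rhsSM ℓ B) := by
      refine SetLike.coe_subset_coe.mpr (Submodule.span_le.mpr ?_)
      rintro T ⟨lam, hlam, μ, rfl⟩
      exact ⟨ThetaAux.isCompactOperator_thetaOp lam μ,
        fun q f hf => ThetaAux.thetaOp_invariance hlam q hf⟩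
    exact closure_minimal hsub ThetaAux.isClosed_rhs
  · rintro K ⟨hcpt, hinv⟩
    rw [Metric.mem_closure_iff]
    intro ε hε
    obtain ⟨F, hF⟩ := ThetaAux.exists_left_proj K hcpt (show (0:ℝ) < ε/3 by positivity)
    obtain ⟨G, hG⟩ := ThetaAux.exists_right_proj K (show (0:ℝ) < ε/3 by positivity) F
    refine ⟨(ThetaAux.projCLM F).comp (K.comp (ThetaAux.projCLM G)),
      SetLike.mem_coe.mpr (ThetaAux.proj_comp_mem_span K hinv F G), ?_⟩
    rw [dist_eq_norm]
    have hsplit : K - (ThetaAux.projCLM F).comp (K.comp (ThetaAux.projCLM G))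
        = (K - (ThetaAux.projCLM F).comp K)
          + ((ThetaAux.projCLM F).comp K
            - (ThetaAux.projCLM F).comp (K.comp (ThetaAux.projCLM G))) := by abel
    calc ‖K - (ThetaAux.projCLM F).comp (K.comp (ThetaAux.projCLM G))‖
        ≤ ‖K - (ThetaAux.projCLM F).comp K‖
          + ‖(ThetaAux.projCLM F).comp K
            - (ThetaAux.projCLM F).comp (K.comp (ThetaAux.projCLM G))‖ := by
          rw [hsplit]; exact norm_add_le _ _
      _ ≤ ε/3 + ε/3 := add_le_add hF hG
      _ < ε := by linarith
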